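/- For natural numbers n and r with r ≤ n, the polynomial f_n^{(r)}(x) = r! Σ_{k=r}^n C(n,k) S(k,r) B_{n−k}(x) has only real zeros, where S(k,r) are Stirling numbers of the second kind and B_m(x) are Bell polynomials; moreover Σ_{n≥0} f_n^{(r)}(x) t^n/n! = (e^t − 1)^r exp(x(e^t − 1)). -/

import Mathlib

/-- A real polynomial has only real zeros: every complex root has imaginary part zero. -/
def RZ (p : Polynomial ℝ) : Prop :=
  ∀ z : ℂ, (p.map (algebraMap ℝ ℂ)).IsRoot z → z.im = 0

/-- Stirling numbers of the second kind. -/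
def stirling2 : ℕ → ℕ → ℕ
  | 0, 0 => 1
  | 0, _ + 1 => 0
  | _ + 1, 0 => 0
  | n + 1, k + 1 => (k + 1) * stirling2 n (k + 1) + stirling2 n k

/-- The Bell polynomial `B_m(x) = ∑_k S(m,k) x^k`. -/
noncomputable def bellPoly (m : ℕ) : Polynomial ℝ :=
  ∑ k ∈ Finset.range (m + 1), Polynomial.C (stirling2 m k : ℝ) * Polynomial.X ^ k

/-- `f_n^{(r)}(x) = r! ∑_{k=r}^n C(n,k) S(k,r) B_{n−k}(x)`. -/
noncomputable def fPoly (n r : ℕ) : Polynomial ℝ :=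
  Polynomial.C (r.factorial : ℝ) *
    ∑ k ∈ Finset.Icc r n,
      Polynomial.C ((n.choose k : ℝ) * (stirling2 k r : ℝ)) * bellPoly (n - k)

/-- The formal power series `e^t − 1`. -/
noncomputable def expm1 : PowerSeries ℝ :=
  PowerSeries.mk fun j => if j = 0 then 0 else 1 / (j.factorial : ℝ)

lemma stirling2_zero_right : ∀ n, stirling2 (n+1) 0 = 0 := fun _ => rfl

lemma stirling2_succ (n k : ℕ) :
    stirling2 (n+1) (k+1) = (k + 1) * stirling2 n (k + 1) + stirling2 n k := rfl

lemma stirling2_eq_zero_of_lt : ∀ {n k : ℕ}, n < k → stirling2 n k = 0 := by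
  intro n
  induction n with
  | zero => intro k hk; match k, hk with | k+1, _ => rfl
  | succ n ih =>
    intro k hk
    match k, hk with
    | k+1, hk =>
      rw [stirling2_succ, ih (by omega), ih (by omega)]; simp

lemma stirling2_self : ∀ n, stirling2 n n = 1 := by
  intro n; induction n with
  | zero => rfl
  | succ n ih =>
    rw [stirling2_succ, stirling2_eq_zero_of_lt (by omega), ih]; simp

lemma stirling2_key : ∀ n k : ℕ,
    ∑ j ∈ Finset.range (n + 1), n.choose j * stirling2 j k = stirling2 (n + 1) (k + 1) := by
  intro n
  induction n with
  | zero =>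
    intro k
    rw [Finset.sum_range_one]
    rw [stirling2_succ, stirling2_eq_zero_of_lt (Nat.succ_pos k)]
    simp
  | succ n ih =>
    intro k
    rw [Finset.sum_range_succ']
    have h1 : ∀ j, (n+1).choose (j+1) * stirling2 (j+1) k
        = n.choose j * stirling2 (j+1) k + n.choose (j+1) * stirling2 (j+1) k := by
      intro j; rw [Nat.choose_succ_succ, Nat.add_mul]
    simp only [h1, Finset.sum_add_distrib]
    have h2 : ∑ j ∈ Finset.range (n+1), n.choose (j+1) * stirling2 (j+1) k
        + (n+1).choose 0 * stirling2 0 k = stirling2 (n + 1) (k + 1) := by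
      rw [Finset.sum_range_succ, Nat.choose_succ_self, Nat.zero_mul, Nat.add_zero,
        ← ih k, Finset.sum_range_succ']
      simp
    rw [add_assoc, h2]
    match k with
    | 0 =>
      have h4 : ∀ j, n.choose j * stirling2 (j+1) 0 = 0 := by
        intro j; rw [stirling2_zero_right]; ring
      simp only [h4, Finset.sum_const_zero, zero_add]
      have h5 : stirling2 (n+1+1) 1 = 1 * stirling2 (n+1) 1 + stirling2 (n+1) 0 := rfl
      rw [h5, stirling2_zero_right]
      ring_nf
    | k+1 =>
      have h4 : ∀ j, n.choose j * stirling2 (j+1) (k+1)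
          = (k+1) * (n.choose j * stirling2 j (k+1)) + n.choose j * stirling2 j k := by
        intro j; rw [stirling2_succ]; ring
      simp only [h4, Finset.sum_add_distrib, ← Finset.mul_sum]
      rw [ih, ih, stirling2_succ (n+1) (k+1)]
      ring

lemma stirling2_sum_range (m k : ℕ) :
    ∑ p ∈ Finset.range m, m.choose p * stirling2 p k = (k + 1) * stirling2 m (k + 1) := by
  match m with
  | 0 => simp [stirling2_eq_zero_of_lt (Nat.succ_pos k)]
  | m+1 =>
    have h1 := stirling2_key (m+1) k
    rw [Finset.sum_range_succ] at h1
    rw [stirling2_succ (m+1) k, Nat.choose_self, one_mul] at h1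
    omega

open Polynomial

lemma bellPoly_coeff (m j : ℕ) : (bellPoly m).coeff j = (stirling2 m j : ℝ) := by
  unfold bellPoly
  rw [Polynomial.finset_sum_coeff]
  simp only [Polynomial.coeff_C_mul, Polynomial.coeff_X_pow]
  rw [Finset.sum_eq_single j]
  · simp
  · intro b _ hb; simp [hb.symm]
  · intro hj
    rw [Finset.mem_range, not_lt] at hj
    rw [stirling2_eq_zero_of_lt (show m < j by omega)]
    simp

lemma bellPoly_derivative (m : ℕ) :
    derivative (bellPoly m) = ∑ j ∈ Finset.range m, C ((m.choose j : ℝ)) * bellPoly j := by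
  apply Polynomial.ext
  intro c
  rw [Polynomial.coeff_derivative, Polynomial.finset_sum_coeff]
  simp only [Polynomial.coeff_C_mul, bellPoly_coeff]
  have hnat : ∑ j ∈ Finset.range m, m.choose j * stirling2 j c = (c+1) * stirling2 m (c+1) :=
    stirling2_sum_range m c
  have : ∑ j ∈ Finset.range m, (m.choose j : ℝ) * (stirling2 j c : ℝ)
      = ((∑ j ∈ Finset.range m, m.choose j * stirling2 j c : ℕ) : ℝ) := by
    push_cast; ring_nf
  rw [this, hnat]
  push_cast
  ring

lemma bellPoly_succ (m : ℕ) :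
    bellPoly (m + 1) = X * (bellPoly m + derivative (bellPoly m)) := by
  apply Polynomial.ext
  intro c
  match c with
  | 0 =>
    rw [Polynomial.coeff_X_mul_zero, bellPoly_coeff, stirling2_zero_right]
    simp
  | c+1 =>
    rw [Polynomial.coeff_X_mul, Polynomial.coeff_add, Polynomial.coeff_derivative,
      bellPoly_coeff, bellPoly_coeff, bellPoly_coeff, stirling2_succ]
    push_cast
    ring

lemma fPoly_eq_range (n r : ℕ) :
    fPoly n r = Polynomial.C (r.factorial : ℝ) *
      ∑ k ∈ Finset.range (n + 1),
        Polynomial.C ((n.choose k : ℝ) * (stirling2 k r : ℝ)) * bellPoly (n - k) := by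
  unfold fPoly
  congr 1
  apply Finset.sum_subset
  · intro k hk
    rw [Finset.mem_Icc] at hk
    rw [Finset.mem_range]
    omega
  · intro k hk hk2
    rw [Finset.mem_range] at hk
    rw [Finset.mem_Icc] at hk2
    rw [stirling2_eq_zero_of_lt (show k < r by omega)]
    simp

lemma fPoly_zero (n : ℕ) : fPoly n 0 = bellPoly n := by
  rw [fPoly_eq_range n 0]
  have : ∀ k ∈ Finset.range (n+1),
      Polynomial.C ((n.choose k : ℝ) * (stirling2 k 0 : ℝ)) * bellPoly (n - k)
      = if k = 0 then bellPoly n else 0 := by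
    intro k hk
    match k with
    | 0 => simp [stirling2]
    | k+1 => rw [stirling2_zero_right]; simp
  rw [Finset.sum_congr rfl this, Finset.sum_ite_eq' (Finset.range (n+1)) 0]
  simp [Nat.factorial]

lemma sum_range_sub_reindex {M : Type*} [AddCommMonoid M] (n k : ℕ) (hk : k ≤ n) (f : ℕ → M) :
    ∑ j ∈ Finset.range (n - k), f j = ∑ l ∈ Finset.Ioc k n, f (n - l) := by
  apply Finset.sum_bij' (i := fun j _ => n - j) (j := fun l _ => n - l)
  · intro a ha; rw [Finset.mem_range] at ha; rw [Finset.mem_Ioc]; omega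
  · intro a ha; rw [Finset.mem_Ioc] at ha; rw [Finset.mem_range]; omega
  · intro a ha; rw [Finset.mem_range] at ha; omega
  · intro a ha; rw [Finset.mem_Ioc] at ha; omega
  · intro a ha; rw [Finset.mem_range] at ha; congr 1; omega

lemma Ioc_eq_filter (n k : ℕ) :
    Finset.Ioc k n = (Finset.range (n+1)).filter (fun l => k < l) := by
  ext l; simp [Finset.mem_Ioc, Finset.mem_range, Finset.mem_filter]; omega

lemma range_eq_filter (n l : ℕ) (h : l ≤ n + 1) :
    Finset.range l = (Finset.range (n+1)).filter (fun k => k < l) := by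
  ext k; simp [Finset.mem_range, Finset.mem_filter]; omega

lemma nat_inner (n l r : ℕ) (hl : l ≤ n) :
    ∑ k ∈ Finset.range l, n.choose k * stirling2 k r * (n - k).choose (n - l)
      = (r + 1) * (n.choose l * stirling2 l (r + 1)) := by
  have hterm : ∀ k ∈ Finset.range l,
      n.choose k * stirling2 k r * (n - k).choose (n - l)
        = n.choose l * (l.choose k * stirling2 k r) := by
    intro k hk
    rw [Finset.mem_range] at hk
    have h1 : (n - k).choose (n - l) = (n - k).choose (l - k) := by
      have := Nat.choose_symm (show l - k ≤ n - k by omega)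
      rw [show n - k - (l - k) = n - l by omega] at this
      exact this
    have h2 : n.choose l * l.choose k = n.choose k * (n - k).choose (l - k) :=
      Nat.choose_mul (by omega)
    calc n.choose k * stirling2 k r * (n - k).choose (n - l)
        = n.choose k * (n - k).choose (l - k) * stirling2 k r := by rw [h1]; ring
      _ = n.choose l * (l.choose k * stirling2 k r) := by rw [← h2]; ring
  rw [Finset.sum_congr rfl hterm, ← Finset.mul_sum, stirling2_sum_range l r]
  ring

lemma fPoly_succ (n r : ℕ) : fPoly n (r + 1) = Polynomial.derivative (fPoly n r) := by
  rw [fPoly_eq_range n (r+1), fPoly_eq_range n r]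
  rw [Polynomial.derivative_C_mul, Polynomial.derivative_sum]
  simp only [Polynomial.derivative_C_mul, bellPoly_derivative]
  -- reindex the inner sums
  have hinner : ∀ k ∈ Finset.range (n+1),
      Polynomial.C ((n.choose k : ℝ) * (stirling2 k r : ℝ)) *
        ∑ j ∈ Finset.range (n - k), Polynomial.C ((n-k).choose j : ℝ) * bellPoly j
      = ∑ l ∈ Finset.range (n+1), (if k < l then
          Polynomial.C ((n.choose k : ℝ) * (stirling2 k r : ℝ) * ((n-k).choose (n-l) : ℝ))
            * bellPoly (n - l) else 0) := by
    intro k hk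
    rw [Finset.mem_range] at hk
    rw [sum_range_sub_reindex n k (by omega), Ioc_eq_filter, Finset.sum_filter,
      Finset.mul_sum]
    apply Finset.sum_congr rfl
    intro l _
    by_cases hkl : k < l
    · simp only [hkl, if_true, ← Polynomial.C_mul, ← mul_assoc]
    · simp [hkl]
  rw [Finset.sum_congr rfl hinner, Finset.sum_comm]
  rw [Finset.mul_sum, Finset.mul_sum]
  apply Finset.sum_congr rfl
  intro l hl
  rw [Finset.mem_range] at hl
  have hsum : ∑ k ∈ Finset.range (n+1), (if k < l then
      Polynomial.C ((n.choose k : ℝ) * (stirling2 k r : ℝ) * ((n-k).choose (n-l) : ℝ))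
        * bellPoly (n - l) else 0)
      = (∑ k ∈ Finset.range l,
          Polynomial.C ((n.choose k : ℝ) * (stirling2 k r : ℝ) * ((n-k).choose (n-l) : ℝ)))
        * bellPoly (n - l) := by
    rw [Finset.sum_mul, range_eq_filter n l (by omega), Finset.sum_filter]
  rw [hsum, ← mul_assoc, ← mul_assoc]
  congr 1
  rw [← Polynomial.C_mul, ← map_sum, ← Polynomial.C_mul]
  congr 1
  have hcast : ∑ k ∈ Finset.range l,
      (n.choose k : ℝ) * (stirling2 k r : ℝ) * ((n-k).choose (n-l) : ℝ)
      = ((∑ k ∈ Finset.range l, n.choose k * stirling2 k r * (n-k).choose (n-l) : ℕ) : ℝ) := by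
    push_cast; ring_nf
  rw [hcast, nat_inner n l r (by omega), Nat.factorial_succ]
  push_cast
  ring

namespace RRaux

open Polynomial Complex

noncomputable def prodLin (s : Multiset ℂ) : Polynomial ℂ := (s.map (fun a => X - C a)).prod

lemma prodLin_facts (z : ℂ) : ∀ (s : Multiset ℂ), (∀ a ∈ s, a ≠ z) →
    eval z (prodLin s) ≠ 0 ∧
      eval z (derivative (prodLin s)) =
        eval z (prodLin s) * (s.map (fun a => (z - a)⁻¹)).sum := by
  intro s
  induction s using Multiset.induction with
  | empty => intro _; simp [prodLin]
  | cons a s ih =>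
    intro hs
    have ha : a ≠ z := hs a (Multiset.mem_cons_self a s)
    obtain ⟨h1, h2⟩ := ih (fun b hb => hs b (Multiset.mem_cons_of_mem hb))
    have hne : z - a ≠ 0 := sub_ne_zero.mpr (fun h => ha (by linear_combination -h))
    have hp : prodLin (a ::ₘ s) = (X - C a) * prodLin s := by
      unfold prodLin; rw [Multiset.map_cons, Multiset.prod_cons]
    constructor
    · rw [hp, eval_mul]
      simp only [eval_sub, eval_X, eval_C]
      exact mul_ne_zero hne h1
    · rw [hp, derivative_mul, eval_add, eval_mul, eval_mul]
      simp only [derivative_sub, derivative_X, derivative_C, sub_zero, eval_one,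
        eval_sub, eval_X, eval_C, Multiset.map_cons, Multiset.sum_cons]
      rw [h2, eval_mul]
      simp only [eval_sub, eval_X, eval_C]
      field_simp

lemma T_im (z : ℂ) : ∀ (s : Multiset ℂ), (∀ a ∈ s, a.im = 0) →
    z.im * ((s.map fun a => (z - a)⁻¹).sum).im ≤ 0 ∧
      (s ≠ 0 → z.im ≠ 0 → z.im * ((s.map fun a => (z - a)⁻¹).sum).im < 0) := by
  intro s
  induction s using Multiset.induction with
  | empty => intro _; simp
  | cons a s ih =>
    intro hs
    have ha : a.im = 0 := hs a (Multiset.mem_cons_self a s)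
    obtain ⟨h1, _⟩ := ih (fun b hb => hs b (Multiset.mem_cons_of_mem hb))
    have him : ((z - a)⁻¹).im = -z.im / Complex.normSq (z - a) := by
      rw [Complex.inv_im, Complex.sub_im, ha, sub_zero]
    have hsq : 0 ≤ Complex.normSq (z - a) := Complex.normSq_nonneg _
    have hhead : z.im * ((z - a)⁻¹).im ≤ 0 := by
      rw [him]
      rcases eq_or_lt_of_le hsq with h | h
      · rw [← h]; simp
      · rw [div_eq_mul_inv]
        nlinarith [mul_self_nonneg z.im, inv_pos.mpr h]
    have hmain : z.im * (((a ::ₘ s).map fun a => (z - a)⁻¹).sum).im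
        = z.im * ((z - a)⁻¹).im + z.im * ((s.map fun a => (z - a)⁻¹).sum).im := by
      rw [Multiset.map_cons, Multiset.sum_cons, Complex.add_im]; ring
    constructor
    · rw [hmain]; linarith
    · intro _ hz
      have hza : z - a ≠ 0 := by
        intro h
        apply hz
        have : z = a := by linear_combination h
        rw [this, ha]
      have hsq' : 0 < Complex.normSq (z - a) := Complex.normSq_pos.mpr hza
      have hhead' : z.im * ((z - a)⁻¹).im < 0 := by
        rw [him, div_eq_mul_inv]
        have : 0 < z.im * z.im := mul_self_pos.mpr hz
        nlinarith [inv_pos.mpr hsq']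
      rw [hmain]; linarith

lemma T_re (z : ℂ) (hzim : z.im = 0) (hzre : 0 < z.re) :
    ∀ (s : Multiset ℂ), (∀ a ∈ s, a.im = 0 ∧ a.re ≤ 0) →
      (0 ≤ ((s.map fun a => (z - a)⁻¹).sum).re ∧ ((s.map fun a => (z - a)⁻¹).sum).im = 0) ∧
        (s ≠ 0 → 0 < ((s.map fun a => (z - a)⁻¹).sum).re) := by
  intro s
  induction s using Multiset.induction with
  | empty => intro _; simp
  | cons a s ih =>
    intro hs
    obtain ⟨ha1, ha2⟩ := hs a (Multiset.mem_cons_self a s)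
    obtain ⟨⟨h1, h2⟩, _⟩ := ih (fun b hb => hs b (Multiset.mem_cons_of_mem hb))
    have hre : 0 < (z - a).re := by rw [Complex.sub_re]; linarith
    have hza : z - a ≠ 0 := fun h => by
      rw [Complex.ext_iff] at h; simp at h; linarith [h.1]
    have hsq : 0 < Complex.normSq (z - a) := Complex.normSq_pos.mpr hza
    have hhre : 0 < ((z - a)⁻¹).re := by
      rw [Complex.inv_re]
      positivity
    have hhim : ((z - a)⁻¹).im = 0 := by
      rw [Complex.inv_im, Complex.sub_im, ha1, hzim]
      simp
    rw [Multiset.map_cons, Multiset.sum_cons, Complex.add_re, Complex.add_im]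
    refine ⟨⟨by linarith, by rw [hhim, h2]; ring⟩, fun _ => by linarith⟩

lemma one_add_T_ne (z : ℂ) (hz : z.im ≠ 0 ∨ 0 < z.re) (s : Multiset ℂ)
    (hs : ∀ a ∈ s, a.im = 0 ∧ a.re ≤ 0) :
    1 + (s.map fun a => (z - a)⁻¹).sum ≠ 0 := by
  intro h
  by_cases him : z.im = 0
  · have hre : 0 < z.re := by rcases hz with h' | h'; exact absurd him h'; exact h'
    obtain ⟨⟨h1, _⟩, _⟩ := T_re z him hre s hs
    have : (1 + (s.map fun a => (z - a)⁻¹).sum).re = 0 := by rw [h]; simp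
    rw [Complex.add_re, Complex.one_re] at this
    linarith
  · rcases eq_or_ne s 0 with rfl | hs0
    · simp at h
    · obtain ⟨_, h2⟩ := T_im z s (fun a ha => (hs a ha).1)
      have h3 := h2 hs0 him
      have : (1 + (s.map fun a => (z - a)⁻¹).sum).im = 0 := by rw [h]; simp
      rw [Complex.add_im, Complex.one_im, zero_add] at this
      rw [this] at h3
      simp at h3

lemma T_ne (z : ℂ) (hz : z.im ≠ 0 ∨ 0 < z.re) (s : Multiset ℂ) (hs0 : s ≠ 0)
    (hs : ∀ a ∈ s, a.im = 0 ∧ a.re ≤ 0) :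
    (s.map fun a => (z - a)⁻¹).sum ≠ 0 := by
  intro h
  by_cases him : z.im = 0
  · have hre : 0 < z.re := by rcases hz with h' | h'; exact absurd him h'; exact h'
    obtain ⟨_, h2⟩ := T_re z him hre s hs
    have := h2 hs0
    rw [h] at this
    simp at this
  · obtain ⟨_, h2⟩ := T_im z s (fun a ha => (hs a ha).1)
    have h3 := h2 hs0 him
    rw [h] at h3
    simp at h3

end RRaux

namespace RRaux

def Good (P : Polynomial ℂ) : Prop := P ≠ 0 ∧ ∀ a ∈ P.roots, a.im = 0 ∧ a.re ≤ 0

lemma logderiv (P : Polynomial ℂ) (hP : P ≠ 0) (z : ℂ) (hz : ∀ a ∈ P.roots, a ≠ z) :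
    eval z P ≠ 0 ∧
      eval z (derivative P) = eval z P * ((P.roots.map fun a => (z - a)⁻¹).sum) := by
  have hsplit : P.Splits := IsAlgClosed.splits P
  have heq := hsplit.eq_prod_roots
  obtain ⟨h1, h2⟩ := prodLin_facts z P.roots hz
  have hlc : P.leadingCoeff ≠ 0 := leadingCoeff_ne_zero.mpr hP
  constructor
  · rw [heq, eval_mul, eval_C]
    exact mul_ne_zero hlc h1
  · have hpl : (Multiset.map (fun a => X - C a) P.roots).prod = prodLin P.roots := rfl
    have hevalP : eval z P = P.leadingCoeff * eval z (prodLin P.roots) := by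
      conv_lhs => rw [heq]
      rw [eval_mul, eval_C, hpl]
    conv_lhs => rw [heq]
    rw [derivative_C_mul, eval_mul, eval_C, hpl, h2, hevalP]
    ring

lemma good_roots_ne (P : Polynomial ℂ) (hG : Good P) (z : ℂ) (hz : z.im ≠ 0 ∨ 0 < z.re) :
    ∀ a ∈ P.roots, a ≠ z := by
  intro a ha h
  subst h
  obtain ⟨h1, h2⟩ := hG.2 a ha
  rcases hz with h | h
  · exact h h1
  · linarith

lemma good_X_mul_add (P : Polynomial ℂ) (hG : Good P) :
    Good (Polynomial.X * (P + derivative P)) := by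
  obtain ⟨hP, hroots⟩ := hG
  have hPP' : P + derivative P ≠ 0 := by
    by_cases hd : P.natDegree = 0
    · rw [eq_C_of_natDegree_eq_zero hd, derivative_C, add_zero,
        ← eq_C_of_natDegree_eq_zero hd]
      exact hP
    · intro h
      have h1 : P = -derivative P := by linear_combination h
      have h2 : (derivative P).natDegree < P.natDegree := natDegree_derivative_lt hd
      have h3 : P.natDegree = (derivative P).natDegree := by
        conv_lhs => rw [h1]
        rw [natDegree_neg]
      omega
  refine ⟨mul_ne_zero X_ne_zero hPP', ?_⟩
  intro a ha
  rw [mem_roots'] at ha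
  obtain ⟨_, hroot⟩ := ha
  by_contra hcon
  push_neg at hcon
  have hz : a.im ≠ 0 ∨ 0 < a.re := by
    by_cases him : a.im = 0
    · right; have := hcon him; linarith
    · left; exact him
  have hne := good_roots_ne P ⟨hP, hroots⟩ a hz
  obtain ⟨h1, h2⟩ := logderiv P hP a hne
  have heval : eval a (Polynomial.X * (P + derivative P)) = 0 := hroot
  rw [eval_mul, eval_X, eval_add, h2] at heval
  have ha0 : a ≠ 0 := by
    intro rfl'
    rcases hz with h | h
    · rw [rfl'] at h; simp at h
    · rw [rfl'] at h; simp at h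
  rcases mul_eq_zero.mp heval with h | h
  · exact ha0 h
  · have hfac : eval a P * (1 + (P.roots.map fun b => (a - b)⁻¹).sum) = 0 := by
      linear_combination h
    rcases mul_eq_zero.mp hfac with h' | h'
    · exact h1 h'
    · exact one_add_T_ne a hz P.roots hroots h'

end RRaux

namespace RRaux

lemma good_derivative (P : Polynomial ℂ) (hG : Good P) (hd : P.natDegree ≠ 0) :
    Good (derivative P) := by
  obtain ⟨hP, hroots⟩ := hG
  have hP' : derivative P ≠ 0 := by
    intro h
    exact hd (natDegree_eq_zero_of_derivative_eq_zero h)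
  refine ⟨hP', ?_⟩
  intro a ha
  rw [mem_roots'] at ha
  obtain ⟨_, hroot⟩ := ha
  by_contra hcon
  push_neg at hcon
  have hz : a.im ≠ 0 ∨ 0 < a.re := by
    by_cases him : a.im = 0
    · right; have := hcon him; linarith
    · left; exact him
  have hne := good_roots_ne P ⟨hP, hroots⟩ a hz
  obtain ⟨h1, h2⟩ := logderiv P hP a hne
  have hs0 : P.roots ≠ 0 := by
    intro h
    have hcard : Multiset.card P.roots = P.natDegree :=
      splits_iff_card_roots.mp (IsAlgClosed.splits P)
    rw [h] at hcard
    simp at hcard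
    exact hd hcard.symm
  have hT := T_ne a hz P.roots hs0 hroots
  have : eval a (derivative P) ≠ 0 := by
    rw [h2]
    exact mul_ne_zero h1 hT
  exact this hroot

noncomputable def QB (n : ℕ) : Polynomial ℂ := (bellPoly n).map (algebraMap ℝ ℂ)

lemma bellPoly_zero_eq : bellPoly 0 = 1 := by
  unfold bellPoly
  rw [Finset.sum_range_one]
  norm_num [stirling2]

lemma good_QB : ∀ n, Good (QB n) := by
  intro n
  induction n with
  | zero =>
    rw [QB, bellPoly_zero_eq, Polynomial.map_one]
    exact ⟨one_ne_zero, by simp [roots_one]⟩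
  | succ n ih =>
    have : QB (n+1) = Polynomial.X * (QB n + derivative (QB n)) := by
      rw [QB, bellPoly_succ, Polynomial.map_mul, Polynomial.map_add, Polynomial.map_X,
        ← derivative_map]
      rfl
    rw [this]
    exact good_X_mul_add (QB n) ih

lemma bellPoly_natDegree (n : ℕ) : (bellPoly n).natDegree = n := by
  apply le_antisymm
  · rw [Polynomial.natDegree_le_iff_coeff_eq_zero]
    intro m hm
    rw [bellPoly_coeff, stirling2_eq_zero_of_lt hm]
    simp
  · apply Polynomial.le_natDegree_of_ne_zero
    rw [bellPoly_coeff, stirling2_self]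
    norm_num

lemma QB_natDegree (n : ℕ) : (QB n).natDegree = n := by
  rw [QB, Polynomial.natDegree_map (algebraMap ℝ ℂ), bellPoly_natDegree]

lemma good_fPoly : ∀ r n : ℕ, r ≤ n →
    Good ((fPoly n r).map (algebraMap ℝ ℂ)) ∧
      ((fPoly n r).map (algebraMap ℝ ℂ)).natDegree = n - r := by
  intro r
  induction r with
  | zero =>
    intro n _
    rw [fPoly_zero]
    exact ⟨good_QB n, by rw [← QB, QB_natDegree]; omega⟩
  | succ r ih =>
    intro n hn
    obtain ⟨hG, hdeg⟩ := ih n (by omega)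
    have hmap : (fPoly n (r+1)).map (algebraMap ℝ ℂ)
        = derivative ((fPoly n r).map (algebraMap ℝ ℂ)) := by
      rw [fPoly_succ, derivative_map]
    have hd0 : ((fPoly n r).map (algebraMap ℝ ℂ)).natDegree ≠ 0 := by
      rw [hdeg]; omega
    constructor
    · rw [hmap]
      exact good_derivative _ hG hd0
    · rw [hmap]
      have := degree_derivative_eq ((fPoly n r).map (algebraMap ℝ ℂ)) (by omega)
      have h2 := natDegree_eq_of_degree_eq_some this
      rw [h2, hdeg]
      omega

end RRaux

lemma cast_factorial_ne (m : ℕ) : ((m.factorial : ℝ)) ≠ 0 :=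
  Nat.cast_ne_zero.mpr (Nat.factorial_ne_zero m)

lemma factorial_split {p m : ℕ} (h : p ≤ m) :
    (m.factorial : ℝ) = (m.choose p : ℝ) * (p.factorial : ℝ) * ((m - p).factorial : ℝ) := by
  rw [← Nat.cast_mul, ← Nat.cast_mul, Nat.choose_mul_factorial_mul_factorial h]

lemma expm1_pow_coeff : ∀ (k m : ℕ), PowerSeries.coeff m (expm1 ^ k)
    = (k.factorial : ℝ) * (stirling2 m k : ℝ) / (m.factorial : ℝ) := by
  intro k
  induction k with
  | zero =>
    intro m
    rw [pow_zero, PowerSeries.coeff_one]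
    match m with
    | 0 => simp [stirling2]
    | m+1 =>
      rw [stirling2_zero_right]
      simp
  | succ k ih =>
    intro m
    rw [pow_succ, PowerSeries.coeff_mul, Finset.Nat.sum_antidiagonal_eq_sum_range_succ_mk,
      Finset.sum_range_succ]
    have hlast : PowerSeries.coeff m (expm1 ^ k) * PowerSeries.coeff (m - m) expm1 = 0 := by
      rw [Nat.sub_self, expm1, PowerSeries.coeff_mk, if_pos rfl, mul_zero]
    rw [hlast, add_zero]
    have hterm : ∀ p ∈ Finset.range m,
        PowerSeries.coeff p (expm1 ^ k) * PowerSeries.coeff (m - p) expm1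
          = (k.factorial : ℝ) / (m.factorial : ℝ) * ((m.choose p * stirling2 p k : ℕ) : ℝ) := by
      intro p hp
      rw [Finset.mem_range] at hp
      rw [ih, expm1, PowerSeries.coeff_mk, if_neg (show ¬(m - p = 0) by omega)]
      rw [factorial_split (show p ≤ m by omega)]
      have h1 := cast_factorial_ne p
      have h2 := cast_factorial_ne (m - p)
      have h3 : ((m.choose p : ℝ)) ≠ 0 :=
        Nat.cast_ne_zero.mpr (Nat.choose_pos (le_of_lt hp)).ne'
      push_cast
      field_simp
    rw [Finset.sum_congr rfl hterm, ← Finset.mul_sum, ← Nat.cast_sum,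
      stirling2_sum_range m k, Nat.factorial_succ]
    push_cast
    have h1 := cast_factorial_ne m
    field_simp

lemma bell_eval (q : ℕ) (x : ℝ) :
    Polynomial.eval x (bellPoly q) = ∑ k ∈ Finset.range (q + 1), (stirling2 q k : ℝ) * x ^ k := by
  unfold bellPoly
  rw [Polynomial.eval_finset_sum]
  simp

lemma g_eq (q : ℕ) (x : ℝ) :
    ∑ k ∈ Finset.range (q + 1), x ^ k / (k.factorial : ℝ) * PowerSeries.coeff q (expm1 ^ k)
      = Polynomial.eval x (bellPoly q) / (q.factorial : ℝ) := by
  have hterm : ∀ k ∈ Finset.range (q + 1),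
      x ^ k / (k.factorial : ℝ) * PowerSeries.coeff q (expm1 ^ k)
        = (stirling2 q k : ℝ) * x ^ k / (q.factorial : ℝ) := by
    intro k _
    rw [expm1_pow_coeff]
    have h1 := cast_factorial_ne k
    have h2 := cast_factorial_ne q
    field_simp
  rw [Finset.sum_congr rfl hterm, ← Finset.sum_div, bell_eval]


/-- For `r ≤ n` the polynomial `f_n^{(r)}` has only real zeros, and moreover its
exponential generating function is `(e^t − 1)^r exp(x (e^t − 1))` (the exponential being
expanded as `∑_k x^k (e^t−1)^k / k!`). -/
theorem fPoly_real_rooted_and_egf :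
    (∀ n r : ℕ, r ≤ n → RZ (fPoly n r)) ∧
      ∀ (r : ℕ) (x : ℝ),
        (PowerSeries.mk fun n => (fPoly n r).eval x / (n.factorial : ℝ))
          = expm1 ^ r *
            PowerSeries.mk (fun n => ∑ k ∈ Finset.range (n + 1),
              x ^ k / (k.factorial : ℝ) * PowerSeries.coeff n (expm1 ^ k)) := by
  constructor
  · intro n r h z hz
    obtain ⟨⟨hne, hroots⟩, _⟩ := RRaux.good_fPoly r n h
    exact (hroots z (Polynomial.mem_roots'.mpr ⟨hne, hz⟩)).1
  · intro r x
    apply PowerSeries.ext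
    intro n
    rw [PowerSeries.coeff_mk, PowerSeries.coeff_mul,
      Finset.Nat.sum_antidiagonal_eq_sum_range_succ_mk]
    have hterm : ∀ p ∈ Finset.range (n + 1),
        PowerSeries.coeff p (expm1 ^ r) *
            PowerSeries.coeff (n - p) (PowerSeries.mk (fun q => ∑ k ∈ Finset.range (q + 1),
              x ^ k / (k.factorial : ℝ) * PowerSeries.coeff q (expm1 ^ k)))
          = (r.factorial : ℝ) * ((n.choose p : ℝ) * (stirling2 p r : ℝ) *
              Polynomial.eval x (bellPoly (n - p))) / (n.factorial : ℝ) := by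
      intro p hp
      rw [Finset.mem_range] at hp
      rw [PowerSeries.coeff_mk, g_eq, expm1_pow_coeff]
      rw [factorial_split (show p ≤ n by omega)]
      have h1 := cast_factorial_ne p
      have h2 := cast_factorial_ne (n - p)
      have h3 : ((n.choose p : ℝ)) ≠ 0 :=
        Nat.cast_ne_zero.mpr (Nat.choose_pos (by omega)).ne'
      field_simp
    rw [Finset.sum_congr rfl hterm]
    rw [fPoly_eq_range n r, Polynomial.eval_mul, Polynomial.eval_C,
      Polynomial.eval_finset_sum]
    simp only [Polynomial.eval_mul, Polynomial.eval_C]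
    rw [Finset.mul_sum, Finset.sum_div]
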